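/- For all natural numbers m, n, k, one has C(m, n+1, k+1) = 2·C(m, n, k+1) + C(m, n, k). -/
import Mathlib


open Finset

/-- The set of ternary words of length `m + n` (as functions `Fin (m+n) → Fin 3`)
having exactly `k` letters equal to `2` and no letter equal to `0` among the
first `m` letters. -/
def ternaryWords (m n k : ℕ) : Finset (Fin (m + n) → Fin 3) :=
  univ.filter fun w =>
    (univ.filter fun i => w i = 2).card = k ∧ ∀ i : Fin (m + n), (i : ℕ) < m → w i ≠ 0

/-- `C m n k` is the number of ternary words of length `m + n` with exactly `k`
twos and no zero among the first `m` letters; it equals the inset number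
`{m,n choose k}` of Janjić–Petković. -/
def C (m n k : ℕ) : ℕ := (ternaryWords m n k).card

def snoc3 {N : ℕ} (w : Fin N → Fin 3) (a : Fin 3) : Fin (N + 1) → Fin 3 :=
  Fin.snoc w a

@[simp] lemma snoc3_castSucc {N : ℕ} (w : Fin N → Fin 3) (a : Fin 3) (i : Fin N) :
    snoc3 w a i.castSucc = w i := by simp [snoc3]

@[simp] lemma snoc3_last {N : ℕ} (w : Fin N → Fin 3) (a : Fin 3) :
    snoc3 w a (Fin.last N) = a := by simp [snoc3]

lemma snoc_twos (m n : ℕ) (w : Fin (m + n) → Fin 3) (a : Fin 3) :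
    (univ.filter fun i : Fin (m + (n + 1)) => snoc3 w a i = 2).card =
      (univ.filter fun i => w i = 2).card + if a = 2 then 1 else 0 := by
  show (univ.filter fun i : Fin ((m + n) + 1) => snoc3 w a i = 2).card = _
  rw [Finset.card_filter, Finset.card_filter, Fin.sum_univ_castSucc]
  simp

lemma snoc_nozero (m n : ℕ) (w : Fin (m + n) → Fin 3) (a : Fin 3) :
    (∀ i : Fin (m + (n + 1)), (i : ℕ) < m → snoc3 w a i ≠ 0) ↔
      (∀ i : Fin (m + n), (i : ℕ) < m → w i ≠ 0) := by
  show (∀ i : Fin ((m + n) + 1), (i : ℕ) < m → snoc3 w a i ≠ 0) ↔ _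
  constructor
  · intro h i hi
    have := h i.castSucc (by simpa using hi)
    simpa using this
  · intro h i
    refine Fin.lastCases ?_ ?_ i
    · intro hlt
      simp only [Fin.val_last] at hlt
      omega
    · intro j hj
      simpa using h j (by simpa using hj)

lemma snoc_inj {N : ℕ} :
    Function.Injective (fun p : (Fin N → Fin 3) × Fin 3 => snoc3 p.1 p.2) := by
  rintro ⟨w, a⟩ ⟨w', a'⟩ h
  simp only at h
  have ha : a = a' := by
    have := congrFun h (Fin.last N); simpa using this
  have hw : w = w' := by
    funext j
    have := congrFun h j.castSucc; simpa using this
  simp [ha, hw]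

theorem stmt_5 (m n k : ℕ) :
    C m (n + 1) (k + 1) = 2 * C m n (k + 1) + C m n k := by
  classical
  have hm : m ≤ m + n := Nat.le_add_right m n
  have himg : ternaryWords m (n + 1) (k + 1) =
      ((ternaryWords m n (k + 1) ×ˢ ({0, 1} : Finset (Fin 3))) ∪
        (ternaryWords m n k ×ˢ ({2} : Finset (Fin 3)))).image
        (fun p : (Fin (m + n) → Fin 3) × Fin 3 => snoc3 p.1 p.2) := by
    ext v
    simp only [ternaryWords, Finset.mem_image, Finset.mem_union, Finset.mem_product,
      Finset.mem_filter, Finset.mem_univ, true_and, Finset.mem_insert, Finset.mem_singleton]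
    constructor
    · rintro ⟨hc, hz⟩
      refine ⟨⟨fun j => v j.castSucc, v (Fin.last (m + n))⟩, ?_, ?_⟩
      · have hv : v = snoc3 (fun j => v j.castSucc) (v (Fin.last (m + n))) := by
          funext i
          refine Fin.lastCases ?_ ?_ i <;> simp
        rw [hv] at hc hz
        rw [snoc_twos m n] at hc
        rw [snoc_nozero m n] at hz
        dsimp only
        by_cases h2 : v (Fin.last (m + n)) = 2
        · right
          simp only [h2, if_pos] at hc
          exact ⟨⟨by omega, hz⟩, h2⟩
        · left
          simp only [h2, if_neg, not_false_iff, Nat.add_zero] at hc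
          refine ⟨⟨hc, hz⟩, ?_⟩
          revert h2
          exact (by decide : ∀ x : Fin 3, x ≠ 2 → x = 0 ∨ x = 1) _
      · funext i
        refine Fin.lastCases ?_ ?_ i <;> simp
    · rintro ⟨⟨w, a⟩, hmem, rfl⟩
      rw [snoc_twos m n, snoc_nozero m n]
      dsimp only at hmem ⊢
      rcases hmem with ⟨⟨hc, hz⟩, ha⟩ | ⟨⟨hc, hz⟩, ha⟩
      · have : a ≠ 2 := by rcases ha with rfl | rfl <;> decide
        refine ⟨by simp [this, hc], hz⟩
      · refine ⟨by simp [ha, hc], hz⟩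
  have hdisj : Disjoint (ternaryWords m n (k + 1) ×ˢ ({0, 1} : Finset (Fin 3)))
      (ternaryWords m n k ×ˢ ({2} : Finset (Fin 3))) := by
    rw [Finset.disjoint_left]
    rintro ⟨w, a⟩ h1 h2
    simp only [Finset.mem_product, Finset.mem_insert, Finset.mem_singleton] at h1 h2
    rcases h1.2 with rfl | rfl <;> exact absurd h2.2 (by decide)
  calc C m (n + 1) (k + 1)
      = (ternaryWords m (n + 1) (k + 1)).card := rfl
    _ = ((ternaryWords m n (k + 1) ×ˢ ({0, 1} : Finset (Fin 3))) ∪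
          (ternaryWords m n k ×ˢ ({2} : Finset (Fin 3)))).card := by
        rw [himg, Finset.card_image_of_injective _ snoc_inj]
    _ = 2 * C m n (k + 1) + C m n k := by
        rw [Finset.card_union_of_disjoint hdisj, Finset.card_product, Finset.card_product]
        simp [C, Nat.mul_comm]
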